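/- Let L be the generator of a reversible irreducible continuous-time Markov chain on a finite state space V with stationary distribution π, with eigenvalues 0 = λ₁ < λ₂ ≤ … of −L. For B ⊊ V nonempty, let λ^B_1 ≤ λ^B_2 ≤ … be the eigenvalues of −L^B, the generator of the chain killed on hitting B (acting on L²(V∖B, π)). Then λ^B_2 − λ^B_1 ≥ λ₂ − 1/E_π[H_B], where H_B is the hitting time of B and E_π denotes expectation started from stationarity. -/

import Mathlib

open Finset Matrix

lemma ortho_complete {n : ℕ} {W : Type*} [Fintype W] [DecidableEq W]
    (hc : Fintype.card W = n) (p : W → ℝ) (hp : ∀ x, 0 < p x)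
    (u : Fin n → W → ℝ)
    (horth : ∀ j k, (∑ x, u j x * u k x * p x) = if j = k then (1:ℝ) else 0) :
    ∀ x y, (∑ k, u k x * u k y * p y) = if x = y then (1:ℝ) else 0 := by
  have e : W ≃ Fin n := Fintype.equivFinOfCardEq hc
  set A : Matrix (Fin n) (Fin n) ℝ :=
    fun k i => u k (e.symm i) * Real.sqrt (p (e.symm i)) with hA
  have hAAT : A * Aᵀ = 1 := by
    ext j k
    simp only [Matrix.mul_apply, Matrix.transpose_apply, Matrix.one_apply]
    simp only [hA]
    rw [← horth j k, ← Equiv.sum_comp e.symm (fun x => u j x * u k x * p x)]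
    apply Finset.sum_congr rfl
    intro i _
    have hs := Real.mul_self_sqrt (le_of_lt (hp (e.symm i)))
    linear_combination (u j (e.symm i) * u k (e.symm i)) * hs
  have hATA : Aᵀ * A = 1 := mul_eq_one_comm.mp hAAT
  intro x y
  have hxy := congrFun (congrFun hATA (e x)) (e y)
  simp only [Matrix.mul_apply, Matrix.transpose_apply, Matrix.one_apply] at hxy
  simp only [hA,
    Equiv.symm_apply_apply, EmbeddingLike.apply_eq_iff_eq] at hxy
  by_cases hxe : x = y
  · subst hxe
    simp only [if_pos rfl] at hxy ⊢
    rw [← hxy]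
    apply Finset.sum_congr rfl
    intro k _
    have hs := Real.mul_self_sqrt (le_of_lt (hp x))
    linear_combination (-(u k x * u k x)) * hs
  · simp only [if_neg hxe] at hxy ⊢
    have hfac : ∑ k, u k x * u k y * p y
        = (p y / (Real.sqrt (p x) * Real.sqrt (p y))) *
          ∑ k, u k x * Real.sqrt (p x) * (u k y * Real.sqrt (p y)) := by
      rw [Finset.mul_sum]
      apply Finset.sum_congr rfl
      intro k _
      have hx0 : Real.sqrt (p x) ≠ 0 := ne_of_gt (Real.sqrt_pos.mpr (hp x))
      have hy0 : Real.sqrt (p y) ≠ 0 := ne_of_gt (Real.sqrt_pos.mpr (hp y))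
      field_simp
    rw [hfac, hxy, mul_zero]

lemma ortho_expand {n : ℕ} {W : Type*} [Fintype W] [DecidableEq W]
    (p : W → ℝ) (u : Fin n → W → ℝ)
    (hcompl : ∀ x y, (∑ k, u k x * u k y * p y) = if x = y then (1:ℝ) else 0) :
    ∀ (f : W → ℝ) (x : W), ∑ k, (∑ y, f y * u k y * p y) * u k x = f x := by
  intro f x
  calc ∑ k, (∑ y, f y * u k y * p y) * u k x
      = ∑ k, ∑ y, f y * (u k x * u k y * p y) := by
        apply Finset.sum_congr rfl; intro k _
        rw [Finset.sum_mul]; apply Finset.sum_congr rfl; intro y _; ring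
    _ = ∑ y, f y * ∑ k, (u k x * u k y * p y) := by
        rw [Finset.sum_comm]
        apply Finset.sum_congr rfl; intro y _; rw [Finset.mul_sum]
    _ = ∑ y, f y * (if x = y then 1 else 0) := by
        apply Finset.sum_congr rfl; intro y _; rw [hcompl]
    _ = f x := by simp
lemma norm_form {n : ℕ} {W : Type*} [Fintype W] [DecidableEq W]
    (p : W → ℝ) (u : Fin n → W → ℝ)
    (hexp : ∀ (f : W → ℝ) (x : W), ∑ k, (∑ y, f y * u k y * p y) * u k x = f x)
    (f : W → ℝ) :
    ∑ k, (∑ y, f y * u k y * p y)^2 = ∑ x, p x * f x ^ 2 := by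
  calc ∑ k, (∑ y, f y * u k y * p y)^2
      = ∑ k, ∑ y, (f y * p y) * ((∑ z, f z * u k z * p z) * u k y) := by
        refine Finset.sum_congr rfl fun k _ => ?_
        rw [sq, Finset.mul_sum]
        exact Finset.sum_congr rfl fun y _ => by ring
    _ = ∑ y, (f y * p y) * ∑ k, (∑ z, f z * u k z * p z) * u k y := by
        rw [Finset.sum_comm]
        exact Finset.sum_congr rfl fun y _ => (Finset.mul_sum _ _ _).symm
    _ = ∑ y, (f y * p y) * f y := by
        exact Finset.sum_congr rfl fun y _ => by rw [hexp f y]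
    _ = ∑ x, p x * f x ^ 2 := Finset.sum_congr rfl fun y _ => by ring

lemma quad_form {n : ℕ} {W : Type*} [Fintype W] [DecidableEq W]
    (p : W → ℝ) (M : W → W → ℝ) (lam : Fin n → ℝ) (u : Fin n → W → ℝ)
    (heig : ∀ k x, -∑ y, M x y * u k y = lam k * u k x)
    (hexp : ∀ (f : W → ℝ) (x : W), ∑ k, (∑ y, f y * u k y * p y) * u k x = f x)
    (f : W → ℝ) :
    ∑ k, lam k * (∑ y, f y * u k y * p y)^2 = ∑ x, p x * f x * (-∑ y, M x y * f y) := by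
  calc ∑ k, lam k * (∑ y, f y * u k y * p y)^2
      = ∑ k, ∑ y, (f y * p y) * ((∑ z, f z * u k z * p z) * (lam k * u k y)) := by
        refine Finset.sum_congr rfl fun k _ => ?_
        rw [show lam k * (∑ y, f y * u k y * p y)^2
            = (lam k * ∑ z, f z * u k z * p z) * (∑ y, f y * u k y * p y) by ring,
          Finset.mul_sum]
        exact Finset.sum_congr rfl fun y _ => by ring
    _ = ∑ y, (f y * p y) * ∑ k, (∑ z, f z * u k z * p z) * (lam k * u k y) := by
        rw [Finset.sum_comm]
        exact Finset.sum_congr rfl fun y _ => (Finset.mul_sum _ _ _).symm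
    _ = ∑ y, (f y * p y) * (-∑ z, M y z * f z) := by
        refine Finset.sum_congr rfl fun y _ => ?_
        congr 1
        calc ∑ k, (∑ z, f z * u k z * p z) * (lam k * u k y)
            = ∑ k, (∑ z, f z * u k z * p z) * (-∑ z, M y z * u k z) := by
              exact Finset.sum_congr rfl fun k _ => by rw [heig k y]
          _ = ∑ k, ∑ z, -(M y z * ((∑ w, f w * u k w * p w) * u k z)) := by
              refine Finset.sum_congr rfl fun k _ => ?_
              rw [mul_neg, Finset.mul_sum, ← Finset.sum_neg_distrib]
              exact Finset.sum_congr rfl fun z _ => by ring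
          _ = ∑ z, ∑ k, -(M y z * ((∑ w, f w * u k w * p w) * u k z)) := Finset.sum_comm
          _ = -∑ z, M y z * f z := by
              rw [← Finset.sum_neg_distrib]
              refine Finset.sum_congr rfl fun z _ => ?_
              rw [Finset.sum_neg_distrib, ← Finset.mul_sum, hexp f z]
    _ = ∑ x, p x * f x * (-∑ y, M x y * f y) := Finset.sum_congr rfl fun y _ => by ring

/-- Let `L` be the generator of a reversible irreducible continuous-time Markov chain on a
finite state space `V` with stationary distribution `π`, with eigenvalues
`0 = λ₁ < λ₂ ≤ …` of `−L` (with eigenvectors orthonormal in `L²(π)`). For a nonempty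
proper `B ⊆ V`, let `λ^B_1 ≤ λ^B_2 ≤ …` be the eigenvalues of `−L^B`, the generator of
the chain killed on hitting `B` (acting on `L²(V∖B, π)`). Let `h x = E_x[H_B]` be the
expected hitting time of `B`, characterised by `h = 0` on `B` and `L h = −1` off `B`,
so that `E_π[H_B] = ∑ x, π x * h x`. Then `λ^B_2 − λ^B_1 ≥ λ₂ − 1/E_π[H_B]`. -/
theorem stmt_6 {V : Type*} [Fintype V] [DecidableEq V]
    (L : Matrix V V ℝ) (π : V → ℝ)
    (hπpos : ∀ x, 0 < π x) (hπsum : ∑ x, π x = 1)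
    (hrow : ∀ x, ∑ y, L x y = 0)
    (hoff : ∀ x y, x ≠ y → 0 ≤ L x y)
    (hrev : ∀ x y, π x * L x y = π y * L y x)
    (B : Finset V) (hBne : B.Nonempty) (hBproper : B ≠ Finset.univ)
    (m : ℕ) (hm : m = Fintype.card V) (h1m : 1 < m)
    (lam : Fin m → ℝ) (v : Fin m → V → ℝ)
    (hmono : Monotone lam)
    (heig : ∀ k x, -∑ y, L x y * v k y = lam k * v k x)
    (horth : ∀ j k, (∑ x, v j x * v k x * π x) = if j = k then (1 : ℝ) else 0)
    (hlam1 : lam ⟨0, by omega⟩ = 0)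
    (hgap : 0 < lam ⟨1, h1m⟩)
    (mB : ℕ) (hmB : mB = Fintype.card V - B.card) (h1mB : 1 < mB)
    (lamB : Fin mB → ℝ) (vB : Fin mB → V → ℝ)
    (hmonoB : Monotone lamB)
    (hvB0 : ∀ k, ∀ x ∈ B, vB k x = 0)
    (heigB : ∀ k, ∀ x ∉ B, -∑ y ∈ Finset.univ \ B, L x y * vB k y = lamB k * vB k x)
    (horthB : ∀ j k, (∑ x ∈ Finset.univ \ B, vB j x * vB k x * π x)
      = if j = k then (1 : ℝ) else 0)
    (h : V → ℝ) (hh0 : ∀ x ∈ B, h x = 0)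
    (hhEq : ∀ x ∉ B, ∑ y, L x y * h y = -1) :
    lamB ⟨1, h1mB⟩ - lamB ⟨0, by omega⟩ ≥ lam ⟨1, h1m⟩ - 1 / (∑ x, π x * h x) := by
  classical
  have h0m : (0:ℕ) < m := by omega
  have h0mB : (0:ℕ) < mB := by omega
  set k0 : Fin m := ⟨0, h0m⟩ with hk0
  set k1 : Fin m := ⟨1, h1m⟩ with hk1
  set k0B : Fin mB := ⟨0, h0mB⟩ with hk0B
  set k1B : Fin mB := ⟨1, h1mB⟩ with hk1B
  -- full-space spectral toolkit
  have hcompl := ortho_complete hm.symm π hπpos v horth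
  have hexp := ortho_expand π v hcompl
  -- subtype setup for the complement of B
  have hcardW : Fintype.card {x : V // x ∉ B} = mB := by
    rw [hmB, Fintype.card_subtype, ← Finset.sdiff_eq_filter,
      Finset.card_sdiff_of_subset (Finset.subset_univ B), Finset.card_univ]
  have hsub : ∀ g : V → ℝ, (∑ x ∈ Finset.univ \ B, g x) = ∑ x : {x : V // x ∉ B}, g x.val :=
    fun g => Finset.sum_subtype _ (fun x => by simp) g
  have hπW : ∀ x : {x : V // x ∉ B}, 0 < π x.val := fun x => hπpos x.val
  have horthW : ∀ j k, (∑ x : {x : V // x ∉ B}, vB j x.val * vB k x.val * π x.val)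
      = if j = k then (1:ℝ) else 0 := by
    intro j k
    rw [← hsub (fun x => vB j x * vB k x * π x)]
    exact horthB j k
  have heigW : ∀ (k : Fin mB) (x : {x : V // x ∉ B}),
      -∑ y : {x : V // x ∉ B}, L x.val y.val * vB k y.val = lamB k * vB k x.val := by
    intro k x
    rw [← hsub (fun y => L x.val y * vB k y)]
    exact heigB k x.val x.prop
  have hcomplW := ortho_complete hcardW (fun x : {x : V // x ∉ B} => π x.val) hπW
    (fun k x => vB k x.val) horthW
  have hexpW := ortho_expand (fun x : {x : V // x ∉ B} => π x.val)
    (fun k x => vB k x.val) hcomplW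
  -- conversion lemmas for functions vanishing on B
  have hinner : ∀ (f : V → ℝ), (∀ x ∈ B, f x = 0) → ∀ x : V,
      (∑ y : {x : V // x ∉ B}, L x y.val * f y.val) = ∑ y, L x y * f y := by
    intro f hf x
    rw [← hsub (fun y => L x y * f y)]
    apply Finset.sum_subset (Finset.sdiff_subset)
    intro y _ hy
    have hyB : y ∈ B := by simpa using hy
    rw [hf y hyB, mul_zero]
  have houter : ∀ (g : V → ℝ), (∀ x ∈ B, g x = 0) →
      (∑ x : {x : V // x ∉ B}, g x.val) = ∑ x, g x := by
    intro g hg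
    rw [← hsub g]
    apply Finset.sum_subset (Finset.sdiff_subset)
    intro y _ hy
    exact hg y (by simpa using hy)
  -- nonnegativity of eigenvalues of the full chain
  have hlamnn : ∀ k : Fin m, 0 ≤ lam k := by
    intro k
    rcases Nat.eq_zero_or_pos k.val with hz | hp
    · have : k = k0 := Fin.ext hz
      rw [this, hk0]; rw [hlam1]
    · exact le_trans hgap.le (hmono (show k1 ≤ k by simp [hk1, Fin.le_def]; omega))
  have hlampos : ∀ k : Fin m, k ≠ k0 → 0 < lam k := by
    intro k hk
    have hp : 1 ≤ k.val := by
      rcases Nat.eq_zero_or_pos k.val with hz | hp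
      · exact absurd (Fin.ext hz) hk
      · exact hp
    exact lt_of_lt_of_le hgap (hmono (show k1 ≤ k by simp [hk1, Fin.le_def]; omega))
  -- E = quadratic form of h (full chain)
  have hQh : (∑ k, lam k * (∑ y, h y * v k y * π y)^2) = ∑ x, π x * h x := by
    rw [quad_form π L lam v heig hexp h]
    refine Finset.sum_congr rfl fun x _ => ?_
    by_cases hx : x ∈ B
    · rw [hh0 x hx]; ring
    · rw [hhEq x hx]; ring
  have hEnn : 0 ≤ ∑ x, π x * h x := by
    rw [← hQh]
    exact Finset.sum_nonneg fun k _ => mul_nonneg (hlamnn k) (sq_nonneg _)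
  -- E > 0
  have hEpos : 0 < ∑ x, π x * h x := by
    rcases hEnn.lt_or_eq with hlt | heq
    · exact hlt
    · exfalso
      have hzero : ∀ k ∈ Finset.univ, lam k * (∑ y, h y * v k y * π y)^2 = 0 := by
        rw [← Finset.sum_eq_zero_iff_of_nonneg
          (fun k _ => mul_nonneg (hlamnn k) (sq_nonneg _))]
        rw [hQh]; exact heq.symm
      have hc : ∀ k : Fin m, k ≠ k0 → (∑ y, h y * v k y * π y) = 0 := by
        intro k hk
        have := hzero k (Finset.mem_univ k)
        rcases mul_eq_zero.mp this with h1 | h2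
        · exact absurd h1 (ne_of_gt (hlampos k hk))
        · exact pow_eq_zero_iff (by norm_num) |>.mp h2
      have hhx : ∀ x, h x = (∑ y, h y * v k0 y * π y) * v k0 x := by
        intro x
        rw [← hexp h x]
        rw [Finset.sum_eq_single k0]
        · intro k _ hk
          rw [hc k hk, zero_mul]
        · intro hk; exact absurd (Finset.mem_univ k0) hk
      obtain ⟨x0, hx0⟩ : ∃ x, x ∉ B := by
        by_contra hall
        push_neg at hall
        exact hBproper (Finset.eq_univ_iff_forall.mpr hall)
      have hsum0 : (∑ y, L x0 y * v k0 y) = 0 := by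
        have := heig k0 x0
        rw [hk0] at this ⊢
        have h0 := hlam1
        rw [show lam ⟨0, by omega⟩ = lam ⟨0, h0m⟩ from rfl] at h0
        rw [h0, zero_mul] at this
        linarith
      have : (∑ y, L x0 y * h y) = 0 := by
        calc (∑ y, L x0 y * h y)
            = ∑ y, (∑ z, h z * v k0 z * π z) * (L x0 y * v k0 y) := by
              refine Finset.sum_congr rfl fun y _ => ?_
              rw [hhx y]; ring
          _ = (∑ z, h z * v k0 z * π z) * ∑ y, L x0 y * v k0 y := by
              rw [Finset.mul_sum]
          _ = 0 := by rw [hsum0, mul_zero]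
      have := hhEq x0 hx0
      linarith
  -- E = quadratic form of h for the killed chain
  have hQBh : (∑ k, lamB k * (∑ y : {x : V // x ∉ B},
      h y.val * vB k y.val * π y.val)^2) = ∑ x, π x * h x := by
    rw [quad_form (fun x : {x : V // x ∉ B} => π x.val)
      (fun x y : {x : V // x ∉ B} => L x.val y.val) lamB
      (fun k x => vB k x.val) heigW hexpW (fun x => h x.val)]
    calc (∑ x : {x : V // x ∉ B}, π x.val * h x.val *
          (-∑ y : {x : V // x ∉ B}, L x.val y.val * h y.val))
        = ∑ x : {x : V // x ∉ B}, π x.val * h x.val := by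
          refine Finset.sum_congr rfl fun x _ => ?_
          rw [hinner h hh0 x.val, hhEq x.val x.prop]; ring
      _ = ∑ x, π x * h x := houter (fun x => π x * h x)
          (fun x hx => by simp [hh0 x hx])
  have hNBh : (∑ k, (∑ y : {x : V // x ∉ B}, h y.val * vB k y.val * π y.val)^2)
      = ∑ x, π x * h x ^ 2 := by
    rw [norm_form (fun x : {x : V // x ∉ B} => π x.val)
      (fun k x => vB k x.val) hexpW (fun x => h x.val)]
    exact houter (fun x => π x * h x ^ 2)
      (fun x hx => by simp [hh0 x hx])
  -- λ^B_1 ≤ 1/E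
  have hmB0le : ∀ k : Fin mB, lamB k0B ≤ lamB k :=
    fun k => hmonoB (by simp [hk0B, Fin.le_def])
  have hlow : lamB k0B * (∑ x, π x * h x ^ 2) ≤ ∑ x, π x * h x := by
    rw [← hNBh, Finset.mul_sum, ← hQBh]
    exact Finset.sum_le_sum fun k _ =>
      mul_le_mul_of_nonneg_right (hmB0le k) (sq_nonneg _)
  have hCS : (∑ x, π x * h x)^2 ≤ ∑ x, π x * h x ^ 2 := by
    have hb := Finset.sum_mul_sq_le_sq_mul_sq Finset.univ
      (fun x => Real.sqrt (π x)) (fun x => Real.sqrt (π x) * h x)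
    have e1 : (∑ x, Real.sqrt (π x) * (Real.sqrt (π x) * h x)) = ∑ x, π x * h x := by
      refine Finset.sum_congr rfl fun x _ => ?_
      rw [← mul_assoc, Real.mul_self_sqrt (hπpos x).le]
    have e2 : (∑ x, Real.sqrt (π x) ^ 2) = 1 := by
      rw [← hπsum]
      exact Finset.sum_congr rfl fun x _ => Real.sq_sqrt (hπpos x).le
    have e3 : (∑ x, (Real.sqrt (π x) * h x) ^ 2) = ∑ x, π x * h x ^ 2 := by
      refine Finset.sum_congr rfl fun x _ => ?_
      rw [mul_pow, Real.sq_sqrt (hπpos x).le]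
    rw [e1, e2, e3, one_mul] at hb
    exact hb
  have hlamB0 : lamB k0B ≤ 1 / (∑ x, π x * h x) := by
    rcases le_or_gt (lamB k0B) 0 with hle | hpos
    · exact hle.trans (by positivity)
    · rw [le_div_iff₀ hEpos]
      nlinarith [mul_le_mul_of_nonneg_left hCS hpos.le, hlow, hEpos]
  -- eigenvector v_0 is constant: ∑ π v_k = 0 for k ≠ 0
  have hone : ∀ k : Fin m, k ≠ k0 → (∑ x, v k x * π x) = 0 := by
    intro k hk
    have key : lam k * ∑ x, v k x * π x = 0 := by
      calc lam k * ∑ x, v k x * π x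
          = ∑ x, π x * (lam k * v k x) := by
            rw [Finset.mul_sum]
            exact Finset.sum_congr rfl fun x _ => by ring
        _ = ∑ x, π x * (-∑ y, L x y * v k y) := by
            exact Finset.sum_congr rfl fun x _ => by rw [heig k x]
        _ = -∑ x, ∑ y, π x * L x y * v k y := by
            rw [← Finset.sum_neg_distrib]
            refine Finset.sum_congr rfl fun x _ => ?_
            rw [mul_neg]
            congr 1
            rw [Finset.mul_sum]
            exact Finset.sum_congr rfl fun y _ => by ring
        _ = -∑ y, (∑ x, π x * L x y) * v k y := by
            rw [Finset.sum_comm]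
            congr 1
            exact Finset.sum_congr rfl fun y _ => by rw [Finset.sum_mul]
        _ = -∑ y, (π y * ∑ x, L y x) * v k y := by
            congr 1
            refine Finset.sum_congr rfl fun y _ => ?_
            congr 1
            rw [Finset.mul_sum]
            exact Finset.sum_congr rfl fun x _ => hrev x y
        _ = 0 := by
            rw [show (∑ y, (π y * ∑ x, L y x) * v k y) = 0 from
              Finset.sum_eq_zero fun y _ => by rw [hrow y, mul_zero, zero_mul], neg_zero]
    exact (mul_eq_zero.mp key).resolve_left (ne_of_gt (hlampos k hk))
  have hv0 : ∀ x : V, (∑ y, (1:ℝ) * v k0 y * π y) * v k0 x = 1 := by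
    intro x
    have := hexp (fun _ => (1:ℝ)) x
    rw [Finset.sum_eq_single k0] at this
    · exact this
    · intro k _ hk
      have : (∑ y, (1:ℝ) * v k y * π y) = 0 := by
        rw [← hone k hk]
        exact Finset.sum_congr rfl fun y _ => by ring
      rw [this, zero_mul]
    · intro hk; exact absurd (Finset.mem_univ k0) hk
  have hv0c : ∀ x : V, v k0 x = (∑ y, (1:ℝ) * v k0 y * π y)⁻¹ := fun x =>
    eq_inv_of_mul_eq_one_left (by rw [mul_comm]; exact hv0 x)
  -- the test function f = a vB0 + b vB1 with ⟨f, 1⟩_π = 0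
  set s0 : ℝ := ∑ x, π x * vB k0B x with hs0
  set s1 : ℝ := ∑ x, π x * vB k1B x with hs1
  set a : ℝ := if s0 = 0 then 1 else s1 with ha
  set b : ℝ := if s0 = 0 then 0 else -s0 with hb
  have hab0 : a * s0 + b * s1 = 0 := by
    by_cases hs : s0 = 0
    · simp [ha, hb, hs]
    · simp only [ha, hb, if_neg hs]; ring
  have habpos : 0 < a^2 + b^2 := by
    by_cases hs : s0 = 0
    · simp [ha, hb, hs]
    · have hbne : b ≠ 0 := by simp [hb, if_neg hs, hs]
      nlinarith [sq_nonneg a, sq_nonneg b, sq_abs b, abs_pos.mpr hbne]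
  set f : V → ℝ := fun x => a * vB k0B x + b * vB k1B x with hf
  have hfB : ∀ x ∈ B, f x = 0 := by
    intro x hx
    simp [hf, hvB0 k0B x hx, hvB0 k1B x hx]
  -- ⟨f, π⟩ = 0 hence c_0(f) = 0
  have hfsum : (∑ y, f y * π y) = 0 := by
    calc (∑ y, f y * π y)
        = ∑ y, (a * (π y * vB k0B y) + b * (π y * vB k1B y)) := by
          exact Finset.sum_congr rfl fun y _ => by simp [hf]; ring
      _ = a * s0 + b * s1 := by
          rw [Finset.sum_add_distrib, ← Finset.mul_sum, ← Finset.mul_sum, hs0, hs1]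
      _ = 0 := hab0
  have hcf0 : (∑ y, f y * v k0 y * π y) = 0 := by
    calc (∑ y, f y * v k0 y * π y)
        = ∑ y, (∑ z, (1:ℝ) * v k0 z * π z)⁻¹ * (f y * π y) := by
          refine Finset.sum_congr rfl fun y _ => ?_
          rw [hv0c y]; ring
      _ = (∑ z, (1:ℝ) * v k0 z * π z)⁻¹ * ∑ y, f y * π y := by
          rw [Finset.mul_sum]
      _ = 0 := by rw [hfsum, mul_zero]
  -- coefficients of f in the killed eigenbasis
  have hne01 : k0B ≠ k1B := by simp [hk0B, hk1B, Fin.ext_iff]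
  have hdf : ∀ k : Fin mB, (∑ y : {x : V // x ∉ B}, f y.val * vB k y.val * π y.val)
      = (if k0B = k then a else 0) + (if k1B = k then b else 0) := by
    intro k
    rw [← hsub (fun y => f y * vB k y * π y)]
    calc (∑ y ∈ Finset.univ \ B, f y * vB k y * π y)
        = ∑ y ∈ Finset.univ \ B,
            (a * (vB k0B y * vB k y * π y) + b * (vB k1B y * vB k y * π y)) := by
          exact Finset.sum_congr rfl fun y _ => by simp [hf]; ring
      _ = a * (if k0B = k then (1:ℝ) else 0) + b * (if k1B = k then (1:ℝ) else 0) := by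
          rw [Finset.sum_add_distrib, ← Finset.mul_sum, ← Finset.mul_sum,
            horthB k0B k, horthB k1B k]
      _ = (if k0B = k then a else 0) + (if k1B = k then b else 0) := by
          by_cases h0 : k0B = k <;> by_cases h1 : k1B = k <;> simp [h0, h1]
  have hQfB : (∑ k, lamB k * (∑ y : {x : V // x ∉ B}, f y.val * vB k y.val * π y.val)^2)
      = lamB k0B * a^2 + lamB k1B * b^2 := by
    calc (∑ k, lamB k * (∑ y : {x : V // x ∉ B}, f y.val * vB k y.val * π y.val)^2)
        = ∑ k, ((if k0B = k then lamB k0B * a^2 else 0)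
            + (if k1B = k then lamB k1B * b^2 else 0)) := by
          refine Finset.sum_congr rfl fun k _ => ?_
          rw [hdf k]
          by_cases h0 : k0B = k <;> by_cases h1 : k1B = k
          · exact absurd (h0.trans h1.symm) hne01
          · rw [if_pos h0, if_neg h1, if_pos h0, if_neg h1, ← h0]; ring
          · rw [if_neg h0, if_pos h1, if_neg h0, if_pos h1, ← h1]; ring
          · rw [if_neg h0, if_neg h1, if_neg h0, if_neg h1]; ring
      _ = lamB k0B * a^2 + lamB k1B * b^2 := by
          rw [Finset.sum_add_distrib, Finset.sum_ite_eq, Finset.sum_ite_eq]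
          simp
  have hNfB : (∑ k, (∑ y : {x : V // x ∉ B}, f y.val * vB k y.val * π y.val)^2)
      = a^2 + b^2 := by
    calc (∑ k, (∑ y : {x : V // x ∉ B}, f y.val * vB k y.val * π y.val)^2)
        = ∑ k, ((if k0B = k then a^2 else 0) + (if k1B = k then b^2 else 0)) := by
          refine Finset.sum_congr rfl fun k _ => ?_
          rw [hdf k]
          by_cases h0 : k0B = k <;> by_cases h1 : k1B = k
          · exact absurd (h0.trans h1.symm) hne01
          · rw [if_pos h0, if_neg h1, if_pos h0, if_neg h1]; ring
          · rw [if_neg h0, if_pos h1, if_neg h0, if_pos h1]; ring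
          · rw [if_neg h0, if_neg h1, if_neg h0, if_neg h1]; ring
      _ = a^2 + b^2 := by
          rw [Finset.sum_add_distrib, Finset.sum_ite_eq, Finset.sum_ite_eq]
          simp
  -- full Dirichlet form of f equals killed form
  have hQrel : (∑ x, π x * f x * (-∑ y, L x y * f y))
      = lamB k0B * a^2 + lamB k1B * b^2 := by
    rw [← hQfB]
    rw [quad_form (fun x : {x : V // x ∉ B} => π x.val)
      (fun x y : {x : V // x ∉ B} => L x.val y.val) lamB
      (fun k x => vB k x.val) heigW hexpW (fun x => f x.val)]
    rw [← houter (fun x => π x * f x * (-∑ y, L x y * f y))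
      (fun x hx => by simp [hfB x hx])]
    exact Finset.sum_congr rfl fun x _ => by rw [hinner f hfB x.val]
  have hnormf : (∑ x, π x * f x ^ 2) = a^2 + b^2 := by
    rw [← hNfB]
    rw [norm_form (fun x : {x : V // x ∉ B} => π x.val)
      (fun k x => vB k x.val) hexpW (fun x => f x.val)]
    rw [← houter (fun x => π x * f x ^ 2) (fun x hx => by simp [hfB x hx])]
  -- Poincaré-type lower bound for f
  have hlower : lam k1 * (∑ x, π x * f x ^ 2) ≤ ∑ x, π x * f x * (-∑ y, L x y * f y) := by
    rw [← quad_form π L lam v heig hexp f, ← norm_form π v hexp f, Finset.mul_sum]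
    apply Finset.sum_le_sum
    intro k _
    by_cases hk : k = k0
    · subst hk
      rw [hcf0]
      simp
    · exact mul_le_mul_of_nonneg_right
        (hmono (show k1 ≤ k by
          have : 1 ≤ k.val := by
            rcases Nat.eq_zero_or_pos k.val with hz | hp
            · exact absurd (Fin.ext hz) hk
            · exact hp
          simp [hk1, Fin.le_def]; omega)) (sq_nonneg _)
  -- conclude λ^B_2 ≥ λ_2
  have hBmono : lamB k0B ≤ lamB k1B := hmonoB (by simp [hk0B, hk1B, Fin.le_def])
  have hlam2le : lam k1 ≤ lamB k1B := by
    have h2 : lam k1 * (a^2 + b^2) ≤ lamB k0B * a^2 + lamB k1B * b^2 := by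
      rw [← hnormf, ← hQrel]
      exact hlower
    nlinarith [sq_nonneg a, sq_nonneg b]
  -- final arithmetic
  have hfin1 : lamB ⟨1, h1mB⟩ = lamB k1B := rfl
  have hfin2 : lamB ⟨0, by omega⟩ = lamB k0B := rfl
  rw [hfin1, hfin2]
  have : lam ⟨1, h1m⟩ = lam k1 := rfl
  rw [this]
  linarith [hlam2le, hlamB0]
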